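/- There exist a constant C > 0 and x₀ such that for all real x ≥ x₀ and all real c with 0 < c ≤ 1, one has #{n ≤ x : t_n ≤ x^c} ≤ #{n ≤ x : P⁺(n) ≤ x^c} + C·x·exp(−√(log x)), uniformly in c. -/

import Mathlib

/-- `tn n` is the least nonnegative integer `t` such that there is a (possibly empty)
subset `S` of `{n+1, ..., n+t}` with `n * ∏_{m ∈ S} m` a perfect square. -/
noncomputable def tn (n : ℕ) : ℕ :=
  sInf {t : ℕ | ∃ S ⊆ Finset.Icc (n + 1) (n + t), IsSquare (n * ∏ m ∈ S, m)}

lemma tn_spec (n : ℕ) (hn : 0 < n) :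
    ∃ S ⊆ Finset.Icc (n + 1) (n + tn n), IsSquare (n * ∏ m ∈ S, m) := by
  have hne : {t : ℕ | ∃ S ⊆ Finset.Icc (n + 1) (n + t), IsSquare (n * ∏ m ∈ S, m)}.Nonempty := by
    refine ⟨3 * n, {4 * n}, ?_, ?_⟩
    · simp only [Finset.singleton_subset_iff, Finset.mem_Icc]
      omega
    · refine ⟨2 * n, ?_⟩
      rw [Finset.prod_singleton]; ring
  exact Nat.sInf_mem hne

lemma even_factorization_of_tn_lt {n p : ℕ} (hn : 0 < n) (hp : p.Prime) (h : tn n < p) :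
    Even (n.factorization p) := by
  by_cases hpn : p ∣ n
  · obtain ⟨S, hS, hsq⟩ := tn_spec n hn
    have hprodne : (∏ m ∈ S, m) ≠ 0 := by
      apply Finset.prod_ne_zero_iff.mpr
      intro m hm
      have := Finset.mem_Icc.mp (hS hm)
      omega
    have hnprod : n * ∏ m ∈ S, m ≠ 0 := by positivity
    -- factorization of a square is even
    obtain ⟨r, hr⟩ := hsq
    have hr0 : r ≠ 0 := by
      intro h0; rw [h0, mul_zero] at hr; exact hnprod hr
    have heven : Even ((n * ∏ m ∈ S, m).factorization p) := by
      rw [hr, Nat.factorization_mul hr0 hr0]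
      exact ⟨r.factorization p, rfl⟩
    have hnotdvd : ¬ p ∣ ∏ m ∈ S, m := by
      intro hd
      obtain ⟨m, hm, hpm⟩ := hp.prime.exists_mem_finset_dvd hd
      have hmIcc := Finset.mem_Icc.mp (hS hm)
      have : p ∣ m - n := (Nat.dvd_sub hpm hpn)
      have h1 : 1 ≤ m - n := by omega
      have h2 : m - n ≤ tn n := by omega
      have := Nat.le_of_dvd (by omega) this
      omega
    have : (∏ m ∈ S, m).factorization p = 0 := by
      rw [Nat.factorization_eq_zero_iff]
      exact Or.inr (Or.inl hnotdvd)
    rwa [Nat.factorization_mul (by omega) hprodne, Finsupp.add_apply, this, add_zero] at heven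
  · rw [Nat.factorization_eq_zero_of_not_dvd hpn]
    exact Even.zero
lemma decomp (n : ℕ) (hn : n ≠ 0) :
    (∏ p ∈ n.primeFactors.filter (fun p => Odd (n.factorization p)), p)
      * (∏ p ∈ n.primeFactors, p ^ (n.factorization p / 2)) ^ 2 = n := by
  conv_rhs => rw [← Nat.factorization_prod_pow_eq_self hn]
  rw [Nat.prod_factorization_eq_prod_primeFactors]
  rw [← Finset.prod_pow, Finset.prod_filter, ← Finset.prod_mul_distrib]
  apply Finset.prod_congr rfl
  intro p hp
  rw [← pow_mul]
  rcases Nat.even_or_odd (n.factorization p) with he | ho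
  · obtain ⟨k, hk⟩ := he
    rw [if_neg (fun h => (Nat.not_even_iff_odd.mpr h) ⟨k, hk⟩), one_mul]
    congr 1
    omega
  · obtain ⟨k, hk⟩ := ho
    rw [if_pos ⟨k, hk⟩, ← pow_succ']
    congr 1
    omega

lemma rankin_count (N T : ℕ) (x σ : ℝ) (hx : 0 < x) (hN : (N : ℝ) ≤ x)
    (hσ0 : 0 ≤ σ) (hσ1 : σ ≤ 1) (hσ32 : (3:ℝ)/2 ≤ 2*σ) :
    (((Finset.Icc 1 N).filter
        (fun n => ∀ p ∈ n.primeFactors, T < p → Even (n.factorization p))).card : ℝ)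
      ≤ x ^ σ * (∏ p ∈ Nat.primesBelow (T+1), (1 + (p:ℝ) ^ (-σ)))
          * ∑ b ∈ Finset.Icc 1 (Nat.sqrt N), ((b:ℝ)) ^ (-(2*σ)) := by
  classical
  set M := (Finset.Icc 1 N).filter
      (fun n => ∀ p ∈ n.primeFactors, T < p → Even (n.factorization p)) with hM
  -- basic facts about members
  have hmem : ∀ n ∈ M, 1 ≤ n ∧ n ≤ N := by
    intro n hn
    have := Finset.mem_filter.mp hn
    exact Finset.mem_Icc.mp this.1
  -- step 1 : card ≤ ∑ (x/n)^σ
  have step1 : (M.card : ℝ) ≤ ∑ n ∈ M, ((x / n) ^ σ) := by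
    rw [Finset.card_eq_sum_ones]
    push_cast
    apply Finset.sum_le_sum
    intro n hn
    obtain ⟨h1, h2⟩ := hmem n hn
    apply Real.one_le_rpow _ hσ0
    rw [le_div_iff₀ (by exact_mod_cast h1)]
    have : (n:ℝ) ≤ N := by exact_mod_cast h2
    linarith
  have step2 : ∀ n ∈ M, (x / n) ^ σ = x ^ σ * ((n:ℝ)) ^ (-σ) := by
    intro n hn
    obtain ⟨h1, _⟩ := hmem n hn
    have hn0 : (0:ℝ) < n := by exact_mod_cast h1
    rw [Real.div_rpow hx.le hn0.le, Real.rpow_neg hn0.le, div_eq_mul_inv]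
  rw [Finset.sum_congr rfl step2, ← Finset.mul_sum] at step1
  -- step 3 : the injection
  set Φ : ℕ → Finset ℕ × ℕ :=
    fun n => (n.primeFactors.filter (fun p => Odd (n.factorization p)),
      ∏ p ∈ n.primeFactors, p ^ (n.factorization p / 2)) with hΦ
  have hrec : ∀ n, n ≠ 0 → (∏ p ∈ (Φ n).1, p) * (Φ n).2 ^ 2 = n := fun n hn => decomp n hn
  set target : Finset (Finset ℕ × ℕ) :=
    (Nat.primesBelow (T+1)).powerset ×ˢ Finset.Icc 1 (Nat.sqrt N) with htarget
  have hmaps : ∀ n ∈ M, Φ n ∈ target := by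
    intro n hn
    obtain ⟨h1, h2⟩ := hmem n hn
    have hcond := (Finset.mem_filter.mp hn).2
    rw [Finset.mem_product]
    constructor
    · rw [Finset.mem_powerset]
      intro p hp
      rw [Finset.mem_filter] at hp
      obtain ⟨hpf, hodd⟩ := hp
      rw [Nat.mem_primesBelow]
      refine ⟨?_, Nat.prime_of_mem_primeFactors hpf⟩
      by_contra hTp
      exact Nat.not_even_iff_odd.mpr hodd (hcond p hpf (by omega))
    · rw [Finset.mem_Icc]
      have hb1 : 1 ≤ (Φ n).2 := by
        show 1 ≤ ∏ p ∈ n.primeFactors, p ^ (n.factorization p / 2)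
        apply Finset.one_le_prod'
        intro p hp
        exact Nat.one_le_pow _ _ (Nat.pos_of_mem_primeFactors hp)
      have hs1 : 1 ≤ ∏ p ∈ (Φ n).1, p := by
        apply Finset.one_le_prod'
        intro p hp
        exact (Nat.prime_of_mem_primeFactors (Finset.mem_filter.mp hp).1).pos
      refine ⟨hb1, ?_⟩
      rw [Nat.le_sqrt]
      calc (Φ n).2 * (Φ n).2 = (Φ n).2 ^ 2 := by ring
        _ ≤ (∏ p ∈ (Φ n).1, p) * (Φ n).2 ^ 2 := Nat.le_mul_of_pos_left _ hs1
        _ = n := hrec n (by omega)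
        _ ≤ N := h2
  have hinj : Set.InjOn Φ M := by
    intro a ha b hb hab
    have h1 := hrec a (by have := hmem a ha; omega)
    have h2 := hrec b (by have := hmem b hb; omega)
    rw [← h1, ← h2, hab]
  -- step 4 : sum over M ≤ sum over target
  set g : Finset ℕ × ℕ → ℝ :=
    fun Ab => ((∏ p ∈ Ab.1, (p:ℝ) ^ (-σ))) * ((Ab.2 : ℝ)) ^ (-(2*σ)) with hg
  have hgval : ∀ n ∈ M, ((n:ℝ)) ^ (-σ) = g (Φ n) := by
    intro n hn
    obtain ⟨h1, _⟩ := hmem n hn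
    have hb0 : (0:ℝ) ≤ ((Φ n).2 : ℝ) := by positivity
    have hs0 : (0:ℝ) ≤ ((∏ p ∈ (Φ n).1, p : ℕ) : ℝ) := by positivity
    have hid : (((∏ p ∈ (Φ n).1, p) : ℕ) : ℝ) * ((Φ n).2 : ℝ) ^ 2 = (n:ℝ) := by
      exact_mod_cast congrArg (Nat.cast : ℕ → ℝ) (hrec n (by omega))
    rw [← hid, Real.mul_rpow hs0 (by positivity), hg]
    congr 1
    · rw [Nat.cast_prod, ← Real.finset_prod_rpow _ _ (fun p _ => by positivity)]
    · rw [← Real.rpow_natCast ((Φ n).2 : ℝ) 2, ← Real.rpow_mul hb0]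
      congr 1
      ring
  have step4 : ∑ n ∈ M, ((n:ℝ)) ^ (-σ) ≤ ∑ Ab ∈ target, g Ab := by
    rw [Finset.sum_congr rfl hgval, ← Finset.sum_image (fun a ha b hb => hinj ha hb)]
    apply Finset.sum_le_sum_of_subset_of_nonneg
    · intro Ab hAb
      obtain ⟨n, hn, rfl⟩ := Finset.mem_image.mp hAb
      exact hmaps n hn
    · intro Ab _ _
      apply mul_nonneg
      · positivity
      · positivity
  -- step 5 : factor the sum over the product set
  have step5 : ∑ Ab ∈ target, g Ab
      = (∑ A ∈ (Nat.primesBelow (T+1)).powerset, ∏ p ∈ A, (p:ℝ) ^ (-σ))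
        * ∑ b ∈ Finset.Icc 1 (Nat.sqrt N), ((b:ℝ)) ^ (-(2*σ)) := by
    rw [htarget, Finset.sum_product, Finset.sum_mul]
    apply Finset.sum_congr rfl
    intro A _
    simp only [hg]
    rw [← Finset.mul_sum]
  have step6 : ∑ A ∈ (Nat.primesBelow (T+1)).powerset, ∏ p ∈ A, (p:ℝ) ^ (-σ)
      = ∏ p ∈ Nat.primesBelow (T+1), (1 + (p:ℝ) ^ (-σ)) := by
    have hcomm : ∏ p ∈ Nat.primesBelow (T+1), (1 + (p:ℝ) ^ (-σ))
        = ∏ p ∈ Nat.primesBelow (T+1), ((p:ℝ) ^ (-σ) + 1) := by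
      apply Finset.prod_congr rfl
      intro p _
      ring
    rw [hcomm, Finset.prod_add]
    apply Finset.sum_congr rfl
    intro A _
    simp
  calc (M.card : ℝ) ≤ x ^ σ * ∑ n ∈ M, ((n:ℝ)) ^ (-σ) := step1
    _ ≤ x ^ σ * ∑ Ab ∈ target, g Ab := by
        apply mul_le_mul_of_nonneg_left step4 (Real.rpow_nonneg hx.le σ)
    _ = _ := by rw [step5, step6, mul_assoc]

lemma theta_le (n : ℕ) : ∑ p ∈ Nat.primesBelow (n+1), Real.log p ≤ n * Real.log 4 := by
  have h4 : (primorial n : ℝ) ≤ (4:ℝ) ^ n := by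
    exact_mod_cast primorial_le_4_pow n
  have hpos : ∀ p ∈ Nat.primesBelow (n+1), (p:ℝ) ≠ 0 := by
    intro p hp
    exact_mod_cast (Nat.prime_of_mem_primesBelow hp).pos.ne'
  have hlog : ∑ p ∈ Nat.primesBelow (n+1), Real.log p = Real.log (primorial n) := by
    rw [← Real.log_prod hpos]
    congr 1
    rw [primorial]
    push_cast
    rfl
  rw [hlog]
  calc Real.log (primorial n) ≤ Real.log ((4:ℝ)^n) := by
        apply Real.log_le_log (by
          have : 0 < primorial n := Finset.prod_pos (fun p hp => (Finset.mem_filter.mp hp).2.pos)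
          exact_mod_cast this) h4
    _ = n * Real.log 4 := by rw [Real.log_pow]

lemma dyadic_step (j : ℕ) (hj : 1 ≤ j) :
    ∑ p ∈ Nat.primesBelow (2^(j+1)+1), (1:ℝ)/p
      ≤ (∑ p ∈ Nat.primesBelow (2^j+1), (1:ℝ)/p) + 4/j := by
  classical
  set P := Nat.primesBelow (2^(j+1)+1) with hP
  have hsplit := Finset.sum_filter_add_sum_filter_not P (fun p => p < 2^j+1) (fun p => (1:ℝ)/p)
  have hfil : P.filter (fun p => p < 2^j+1) = Nat.primesBelow (2^j+1) := by
    ext p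
    simp only [Finset.mem_filter, hP, Nat.mem_primesBelow]
    have hpow : 2^j ≤ 2^(j+1) := Nat.pow_le_pow_right (by norm_num) (by omega)
    constructor
    · rintro ⟨⟨_, hp⟩, hlt⟩; exact ⟨hlt, hp⟩
    · rintro ⟨hlt, hp⟩; exact ⟨⟨by omega, hp⟩, hlt⟩
  set Q := P.filter (fun p => ¬ p < 2^j+1) with hQ
  have hQmem : ∀ p ∈ Q, 2^j ≤ p ∧ p.Prime ∧ p ∈ P := by
    intro p hp
    rw [hQ, Finset.mem_filter] at hp
    refine ⟨by omega, Nat.prime_of_mem_primesBelow hp.1, hp.1⟩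
  -- card bound
  have hcard : (Q.card : ℝ) * (j * Real.log 2) ≤ 2^(j+2) * Real.log 2 := by
    have h1 : ∀ p ∈ Q, j * Real.log 2 ≤ Real.log p := by
      intro p hp
      obtain ⟨hle, hpp, _⟩ := hQmem p hp
      calc (j:ℝ) * Real.log 2 = Real.log ((2:ℝ)^j) := by rw [Real.log_pow]
        _ ≤ Real.log p := by
            apply Real.log_le_log (by positivity)
            exact_mod_cast hle
    have h2 : (Q.card : ℝ) * (j * Real.log 2) ≤ ∑ p ∈ Q, Real.log p := by
      calc (Q.card : ℝ) * (j * Real.log 2) = ∑ _p ∈ Q, ((j:ℝ) * Real.log 2) := by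
            rw [Finset.sum_const, nsmul_eq_mul]
        _ ≤ ∑ p ∈ Q, Real.log p := Finset.sum_le_sum h1
    have h3 : ∑ p ∈ Q, Real.log p ≤ ∑ p ∈ P, Real.log p := by
      apply Finset.sum_le_sum_of_subset_of_nonneg (Finset.filter_subset _ _)
      intro p hp _
      exact Real.log_nonneg (by exact_mod_cast (Nat.prime_of_mem_primesBelow hp).one_lt.le)
    have h4 : ∑ p ∈ P, Real.log p ≤ 2^(j+1) * Real.log 4 := by
      have := theta_le (2^(j+1))
      rw [hP]
      push_cast at this ⊢
      exact this
    have h5 : (2:ℝ)^(j+1) * Real.log 4 = 2^(j+2) * Real.log 2 := by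
      have : (4:ℝ) = 2^2 := by norm_num
      rw [this, Real.log_pow]
      push_cast
      ring
    calc (Q.card : ℝ) * (j * Real.log 2) ≤ ∑ p ∈ Q, Real.log p := h2
      _ ≤ ∑ p ∈ P, Real.log p := h3
      _ ≤ 2^(j+1) * Real.log 4 := h4
      _ = 2^(j+2) * Real.log 2 := h5
  have hlog2 : (0:ℝ) < Real.log 2 := Real.log_pos (by norm_num)
  have hcard' : (Q.card : ℝ) ≤ 2^(j+2) / j := by
    rw [le_div_iff₀ (by positivity : (0:ℝ) < (j:ℝ))]
    have := (mul_le_mul_iff_of_pos_right hlog2).mp (by linarith [hcard] : (Q.card : ℝ) * (j:ℝ) * Real.log 2 ≤ 2^(j+2) * Real.log 2)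
    linarith
  -- sum over Q
  have hsumQ : ∑ p ∈ Q, (1:ℝ)/p ≤ 4 / j := by
    have h1 : ∀ p ∈ Q, (1:ℝ)/p ≤ 1/2^j := by
      intro p hp
      obtain ⟨hle, hpp, _⟩ := hQmem p hp
      apply one_div_le_one_div_of_le (by positivity)
      exact_mod_cast hle
    calc ∑ p ∈ Q, (1:ℝ)/p ≤ ∑ _p ∈ Q, (1:ℝ)/2^j := Finset.sum_le_sum h1
      _ = (Q.card : ℝ) * (1/2^j) := by rw [Finset.sum_const, nsmul_eq_mul]
      _ ≤ (2^(j+2) / j) * (1/2^j) := by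
          apply mul_le_mul_of_nonneg_right hcard' (by positivity)
      _ = 4 / j := by
          rw [div_mul_div_comm]
          rw [show ((2:ℝ))^(j+2) = 4 * 2^j by rw [pow_succ, pow_succ]; ring]
          have : ((2:ℝ))^j ≠ 0 := by positivity
          field_simp
  calc ∑ p ∈ P, (1:ℝ)/p
      = (∑ p ∈ Nat.primesBelow (2^j+1), (1:ℝ)/p) + ∑ p ∈ Q, (1:ℝ)/p := by
        rw [← hfil, ← hsplit]
    _ ≤ (∑ p ∈ Nat.primesBelow (2^j+1), (1:ℝ)/p) + 4/j := by linarith [hsumQ]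

lemma harmonic_le (m : ℕ) : ∑ j ∈ Finset.Icc 1 m, (1:ℝ)/j ≤ 1 + Real.log m := by
  induction m with
  | zero => simp
  | succ k ih =>
    rcases Nat.eq_zero_or_pos k with hk | hk
    · subst hk; norm_num
    · rw [Finset.sum_Icc_succ_top (by omega)]
      have hstep : (1:ℝ)/(k+1) ≤ Real.log (k+1) - Real.log k := by
        have h1 : Real.log ((k:ℝ)/(k+1)) ≤ (k:ℝ)/(k+1) - 1 := by
          apply Real.log_le_sub_one_of_pos
          positivity
        have h2 : Real.log ((k:ℝ)/(k+1)) = Real.log k - Real.log (k+1) := by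
          rw [Real.log_div (by positivity) (by positivity)]
        have h3 : (k:ℝ)/(k+1) - 1 = -(1/(k+1)) := by
          field_simp
          ring
        rw [h2, h3] at h1
        linarith
      have hcast : ((k+1 : ℕ):ℝ) = (k:ℝ)+1 := by push_cast; ring
      rw [hcast]
      push_cast
      push_cast at ih hstep
      linarith [ih]

lemma mertens_pow (J : ℕ) (hJ : 1 ≤ J) :
    ∑ p ∈ Nat.primesBelow (2^J+1), (1:ℝ)/p ≤ (1:ℝ)/2 + 4 * ∑ j ∈ Finset.Icc 1 (J-1), (1:ℝ)/j := by
  induction J with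
  | zero => omega
  | succ k ih =>
    rcases Nat.eq_zero_or_pos k with hk | hk
    · subst hk
      norm_num
      have : Nat.primesBelow 3 = {2} := by decide
      rw [this]
      norm_num
    · have step := dyadic_step k hk
      have ihk := ih hk
      have hsum : ∑ j ∈ Finset.Icc 1 (k+1-1), (1:ℝ)/j
          = (∑ j ∈ Finset.Icc 1 (k-1), (1:ℝ)/j) + 1/k := by
        have h1 : k + 1 - 1 = (k-1) + 1 := by omega
        rw [h1, Finset.sum_Icc_succ_top (by omega)]
        congr 2
        push_cast [Nat.sub_add_cancel hk]
        norm_num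
      rw [hsum]
      have h4 : (4:ℝ)/k = 4 * (1/k) := by ring
      linarith [step, ihk]

lemma mertens_final (J : ℕ) (hJ : 1 ≤ J) :
    ∑ p ∈ Nat.primesBelow (2^J+1), (1:ℝ)/p ≤ 5 + 4 * Real.log J := by
  have h := mertens_pow J hJ
  have hh := harmonic_le (J-1)
  have hlogJ : (0:ℝ) ≤ Real.log J := Real.log_natCast_nonneg J
  rcases Nat.eq_zero_or_pos (J-1) with h0 | h0
  · rw [h0] at h
    simp at h
    simp only [one_div]
    linarith
  · have hmono : Real.log ((J-1 : ℕ):ℝ) ≤ Real.log J := by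
      apply Real.log_le_log (by exact_mod_cast h0)
      exact_mod_cast Nat.sub_le J 1
    linarith

lemma sum_primes_recip_le (m J : ℕ) (hJ : 1 ≤ J) (h : m ≤ 2^J) :
    ∑ p ∈ Nat.primesBelow (m+1), (1:ℝ)/p ≤ 5 + 4 * Real.log J := by
  have hsub : Nat.primesBelow (m+1) ⊆ Nat.primesBelow (2^J+1) := by
    intro p hp
    rw [Nat.mem_primesBelow] at hp ⊢
    exact ⟨by omega, hp.2⟩
  calc ∑ p ∈ Nat.primesBelow (m+1), (1:ℝ)/p
      ≤ ∑ p ∈ Nat.primesBelow (2^J+1), (1:ℝ)/p := by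
        apply Finset.sum_le_sum_of_subset_of_nonneg hsub
        intro p hp _
        positivity
    _ ≤ 5 + 4 * Real.log J := mertens_final J hJ

lemma prod_one_add_le (T : ℕ) (σ K : ℝ) (hK : 0 ≤ K)
    (h : ∀ p ∈ Nat.primesBelow (T+1), (p:ℝ)^((1:ℝ)-σ) ≤ K) :
    ∏ p ∈ Nat.primesBelow (T+1), (1 + (p:ℝ)^(-σ))
      ≤ Real.exp (K * ∑ p ∈ Nat.primesBelow (T+1), (1:ℝ)/p) := by
  have hp0 : ∀ p ∈ Nat.primesBelow (T+1), (0:ℝ) < p := by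
    intro p hp
    exact_mod_cast (Nat.prime_of_mem_primesBelow hp).pos
  calc ∏ p ∈ Nat.primesBelow (T+1), (1 + (p:ℝ)^(-σ))
      ≤ ∏ p ∈ Nat.primesBelow (T+1), Real.exp ((p:ℝ)^(-σ)) := by
        apply Finset.prod_le_prod
        · intro p hp
          have := Real.rpow_nonneg (hp0 p hp).le (-σ)
          linarith
        · intro p hp
          linarith [Real.add_one_le_exp ((p:ℝ)^(-σ))]
    _ = Real.exp (∑ p ∈ Nat.primesBelow (T+1), (p:ℝ)^(-σ)) := by
        rw [Real.exp_sum]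
    _ ≤ Real.exp (K * ∑ p ∈ Nat.primesBelow (T+1), (1:ℝ)/p) := by
        apply Real.exp_le_exp.mpr
        rw [Finset.mul_sum]
        apply Finset.sum_le_sum
        intro p hp
        have hppos := hp0 p hp
        have hsplit : (p:ℝ)^(-σ) = (p:ℝ)⁻¹ * (p:ℝ)^((1:ℝ)-σ) := by
          rw [← Real.rpow_neg_one (p:ℝ), ← Real.rpow_add hppos]
          congr 1
          ring
        rw [hsplit]
        calc (p:ℝ)⁻¹ * (p:ℝ)^((1:ℝ)-σ) ≤ (p:ℝ)⁻¹ * K := by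
              apply mul_le_mul_of_nonneg_left (h p hp) (by positivity)
          _ = K * (1/p) := by ring

lemma sum_sqrt_inv_le (B : ℕ) : ∑ b ∈ Finset.Icc 1 B, ((b:ℝ) * Real.sqrt b)⁻¹ ≤ 3 := by
  have key : ∀ B : ℕ, 1 ≤ B → ∑ b ∈ Finset.Icc 1 B, ((b:ℝ) * Real.sqrt b)⁻¹
      ≤ 3 - 2 / Real.sqrt B := by
    intro B hB
    induction B with
    | zero => omega
    | succ k ih =>
      rcases Nat.eq_zero_or_pos k with hk | hk
      · subst hk
        norm_num
      · have ihk := ih hk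
        rw [Finset.sum_Icc_succ_top (by omega)]
        have hstep : (((k+1 : ℕ):ℝ) * Real.sqrt ((k+1 : ℕ)))⁻¹
            ≤ 2 / Real.sqrt k - 2 / Real.sqrt ((k+1 : ℕ)) := by
          set a := Real.sqrt k with ha
          set c := Real.sqrt ((k+1 : ℕ)) with hc
          have ha0 : 0 < a := Real.sqrt_pos.mpr (by exact_mod_cast hk)
          have hc0 : 0 < c := Real.sqrt_pos.mpr (by positivity)
          have ha2 : a^2 = k := Real.sq_sqrt (by positivity)
          have hc2 : c^2 = ((k+1:ℕ):ℝ) := Real.sq_sqrt (by positivity)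
          have hac : a ≤ c := Real.sqrt_le_sqrt (by push_cast; linarith)
          have hrw : (((k+1 : ℕ):ℝ) * c)⁻¹ = (c^2 * c)⁻¹ := by rw [hc2]
          rw [hrw]
          rw [div_sub_div _ _ (ne_of_gt ha0) (ne_of_gt hc0), inv_eq_one_div,
            div_le_div_iff₀ (by positivity) (by positivity)]
          have hca : c^2 - a^2 = 1 := by
            rw [ha2, hc2]; push_cast; ring
          nlinarith [mul_pos ha0 hc0, mul_pos (mul_pos ha0 hc0) hc0,
            mul_le_mul_of_nonneg_right hac (mul_pos hc0 hc0).le,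
            mul_le_mul_of_nonneg_right hac (mul_pos ha0 hc0).le]
        have hfin : 2 / Real.sqrt ((k:ℝ)+1) = 2 / Real.sqrt ((k+1 : ℕ):ℝ) := by
          norm_num
        push_cast at ihk hstep ⊢
        linarith
  rcases Nat.eq_zero_or_pos B with h0 | h0
  · subst h0; simp
  · have := key B h0
    have h2 : 0 < 2 / Real.sqrt B := by
      positivity
    linarith

lemma sum_rpow_le_three (B : ℕ) (σ : ℝ) (h32 : (3:ℝ)/2 ≤ 2*σ) :
    ∑ b ∈ Finset.Icc 1 B, (b:ℝ)^(-(2*σ)) ≤ 3 := by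
  calc ∑ b ∈ Finset.Icc 1 B, (b:ℝ)^(-(2*σ))
      ≤ ∑ b ∈ Finset.Icc 1 B, ((b:ℝ) * Real.sqrt b)⁻¹ := by
        apply Finset.sum_le_sum
        intro b hb
        have hb1 : 1 ≤ b := (Finset.mem_Icc.mp hb).1
        have hb1' : (1:ℝ) ≤ b := by exact_mod_cast hb1
        have hb0 : (0:ℝ) < b := by linarith
        have heq : ((b:ℝ) * Real.sqrt b)⁻¹ = (b:ℝ)^(-(3/2 : ℝ)) := by
          rw [Real.rpow_neg hb0.le, Real.sqrt_eq_rpow]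
          congr 1
          rw [show (3/2 : ℝ) = 1 + 1/2 by norm_num, Real.rpow_add hb0, Real.rpow_one]
        rw [heq]
        apply Real.rpow_le_rpow_of_exponent_le hb1'
        linarith
    _ ≤ 3 := sum_sqrt_inv_le B

lemma sum_inv_sq_le (m N : ℕ) (hm : 2 ≤ m) :
    ∑ k ∈ Finset.Icc m N, ((k:ℝ)^2)⁻¹ ≤ ((m:ℝ) - 1)⁻¹ := by
  have helper : ∀ a:ℝ, 0 < a → ((a+1)^2)⁻¹ ≤ a⁻¹ - (a+1)⁻¹ := by
    intro a ha
    have h1 : (0:ℝ) < a+1 := by linarith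
    rw [inv_eq_one_div, inv_eq_one_div, inv_eq_one_div,
      div_sub_div _ _ (ne_of_gt ha) (ne_of_gt h1),
      div_le_div_iff₀ (by positivity) (by positivity)]
    nlinarith
  have key : ∀ N : ℕ, m ≤ N → ∑ k ∈ Finset.Icc m N, ((k:ℝ)^2)⁻¹ ≤ ((m:ℝ)-1)⁻¹ - ((N:ℝ))⁻¹ := by
    intro N hN
    induction N with
    | zero => omega
    | succ k ih =>
      rcases Nat.lt_or_ge k m with hk | hk
      · have : m = k + 1 := by omega
        subst this
        rw [Finset.Icc_self, Finset.sum_singleton]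
        have hk0 : (0:ℝ) < k := by
          have : 1 ≤ k := by omega
          have : (1:ℝ) ≤ k := by exact_mod_cast this
          linarith
        have := helper k hk0
        push_cast
        have he : ((k:ℝ)+1-1) = k := by ring
        rw [he]
        linarith
      · have ihk := ih hk
        rw [Finset.sum_Icc_succ_top (by omega)]
        have hk0 : (0:ℝ) < k := by
          have : 2 ≤ k := le_trans hm hk
          have : (2:ℝ) ≤ k := by exact_mod_cast this
          linarith
        have := helper k hk0
        push_cast at ihk ⊢
        linarith
  rcases Nat.lt_or_ge N m with h0 | h0
  · rw [Finset.Icc_eq_empty (by omega), Finset.sum_empty]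
    have h2 : (2:ℝ) ≤ m := by exact_mod_cast hm
    exact inv_nonneg.mpr (by linarith)
  · have := key N h0
    have hN0 : (0:ℝ) < N := by
      have : 2 ≤ N := le_trans hm h0
      have : (2:ℝ) ≤ N := by exact_mod_cast this
      linarith
    have : (0:ℝ) < (N:ℝ)⁻¹ := by positivity
    linarith

lemma card_bad_le (N T : ℕ) (hT : 1 ≤ T) (E : Finset ℕ) (hE : E ⊆ Finset.Icc 1 N)
    (h : ∀ n ∈ E, ∃ p, T < p ∧ p^2 ∣ n) : (E.card : ℝ) ≤ (N:ℝ)/T := by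
  classical
  have hsub : E ⊆ (Finset.Icc (T+1) N).biUnion
      (fun k => (Finset.Icc 1 N).filter (fun n => k^2 ∣ n)) := by
    intro n hn
    obtain ⟨p, hTp, hdvd⟩ := h n hn
    have hnIcc := Finset.mem_Icc.mp (hE hn)
    have hpn : p ≤ N := by
      have h2 : p ≤ p^2 := by nlinarith
      have := Nat.le_of_dvd (by omega) hdvd
      omega
    rw [Finset.mem_biUnion]
    exact ⟨p, Finset.mem_Icc.mpr ⟨by omega, hpn⟩,
      Finset.mem_filter.mpr ⟨Finset.mem_Icc.mpr hnIcc, hdvd⟩⟩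
  have hcard1 : ∀ k ∈ Finset.Icc (T+1) N,
      (((Finset.Icc 1 N).filter (fun n => k^2 ∣ n)).card : ℝ) ≤ (N:ℝ) * ((k:ℝ)^2)⁻¹ := by
    intro k hk
    have hk1 : 1 ≤ k := by
      have := (Finset.mem_Icc.mp hk).1
      omega
    have : Finset.Icc 1 N = Finset.Ioc 0 N := rfl
    rw [this]
    have hcount := Nat.Ioc_filter_dvd_card_eq_div N (k^2)
    have : ((Finset.Ioc 0 N).filter (fun n => k^2 ∣ n)).card = N / (k^2) := hcount
    rw [this]
    have hlc : ((N / (k^2) : ℕ) : ℝ) ≤ (N:ℝ) / ((k:ℝ)^2) := by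
      have := Nat.cast_div_le (α := ℝ) (m := N) (n := k^2)
      push_cast at this
      exact this
    rw [div_eq_mul_inv] at hlc
    exact hlc
  calc (E.card : ℝ)
      ≤ (((Finset.Icc (T+1) N).biUnion
          (fun k => (Finset.Icc 1 N).filter (fun n => k^2 ∣ n))).card : ℝ) := by
        exact_mod_cast Finset.card_le_card hsub
    _ ≤ ∑ k ∈ Finset.Icc (T+1) N,
          (((Finset.Icc 1 N).filter (fun n => k^2 ∣ n)).card : ℝ) := by
        exact_mod_cast Finset.card_biUnion_le
    _ ≤ ∑ k ∈ Finset.Icc (T+1) N, (N:ℝ) * ((k:ℝ)^2)⁻¹ := Finset.sum_le_sum hcard1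
    _ = (N:ℝ) * ∑ k ∈ Finset.Icc (T+1) N, ((k:ℝ)^2)⁻¹ := by rw [Finset.mul_sum]
    _ ≤ (N:ℝ) * ((T:ℝ))⁻¹ := by
        apply mul_le_mul_of_nonneg_left _ (by positivity)
        have := sum_inv_sq_le (T+1) N (by omega)
        push_cast at this ⊢
        calc ∑ k ∈ Finset.Icc (T+1) N, ((k:ℝ)^2)⁻¹ ≤ ((T:ℝ)+1-1)⁻¹ := this
          _ = ((T:ℝ))⁻¹ := by ring_nf
    _ = (N:ℝ)/T := by rw [div_eq_mul_inv]


/-- `Pplus n` is the largest prime factor of `n`, with `Pplus 1 = 1`. -/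
def Pplus (n : ℕ) : ℕ := n.primeFactors.max.unbotD 1

lemma Pplus_mem (n : ℕ) (h : 2 ≤ Pplus n) : Pplus n ∈ n.primeFactors := by
  by_cases hne : n.primeFactors.Nonempty
  · obtain ⟨a, ha⟩ := Finset.max_of_nonempty hne
    have hP : Pplus n = a := by rw [Pplus, ha]; rfl
    rw [hP]
    exact Finset.mem_of_max ha
  · rw [Finset.not_nonempty_iff_eq_empty] at hne
    rw [Pplus, hne] at h
    simp at h

set_option maxHeartbeats 2000000 in
theorem stmt_2 :
    ∃ C > (0 : ℝ), ∃ x₀ : ℝ, ∀ x : ℝ, x₀ ≤ x → ∀ c : ℝ, 0 < c → c ≤ 1 →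
      (({n : ℕ | 0 < n ∧ (n : ℝ) ≤ x ∧ (tn n : ℝ) ≤ x ^ c}.ncard : ℝ))
        ≤ ({n : ℕ | 0 < n ∧ (n : ℝ) ≤ x ∧ (Pplus n : ℝ) ≤ x ^ c}.ncard : ℝ)
          + C * x * Real.exp (-Real.sqrt (Real.log x)) := by
  classical
  refine ⟨4, by norm_num, Real.exp (10^9), ?_⟩
  intro x hx c hc0 hc1
  have hx1 : (1:ℝ) ≤ x := le_trans (Real.one_le_exp (by norm_num)) hx
  have hx0 : (0:ℝ) < x := by linarith
  set L := Real.log x with hLdef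
  have hL : (10^9 : ℝ) ≤ L := by
    rw [hLdef]
    calc (10^9:ℝ) = Real.log (Real.exp (10^9)) := (Real.log_exp _).symm
      _ ≤ Real.log x := Real.log_le_log (Real.exp_pos _) hx
  have hL0 : (0:ℝ) < L := lt_of_lt_of_le (by norm_num) hL
  set u := Real.sqrt L with hudef
  have hu2 : u^2 = L := Real.sq_sqrt hL0.le
  have hu : (30000:ℝ) ≤ u := by
    rw [hudef, Real.le_sqrt (by norm_num) hL0.le]
    nlinarith
  have hu0 : (0:ℝ) < u := by linarith
  set y := x ^ c with hydef
  have hy1 : (1:ℝ) ≤ y := Real.one_le_rpow hx1 hc0.le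
  have hy0 : (0:ℝ) < y := by linarith
  have hyexp : y = Real.exp (c * L) := by
    rw [hydef, Real.rpow_def_of_pos hx0, hLdef]
    ring_nf
  set N := ⌊x⌋₊ with hNdef
  have hNx : (N:ℝ) ≤ x := Nat.floor_le hx0.le
  set T := ⌊y⌋₊ with hTdef
  have hT1 : 1 ≤ T := Nat.le_floor (by exact_mod_cast hy1)
  have hTy : (T:ℝ) ≤ y := Nat.floor_le hy0.le
  have hTlt : ∀ p : ℕ, T < p ↔ y < p := by
    intro p
    rw [hTdef]
    exact Nat.floor_lt hy0.le
  set E : Finset ℕ := (Finset.Icc 1 N).filter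
      (fun n => (∀ p ∈ n.primeFactors, T < p → Even (n.factorization p)) ∧ T < Pplus n)
    with hE
  -- the splitting of the left set
  have hsub : {n : ℕ | 0 < n ∧ (n : ℝ) ≤ x ∧ (tn n : ℝ) ≤ y}
      ⊆ {n : ℕ | 0 < n ∧ (n : ℝ) ≤ x ∧ (Pplus n : ℝ) ≤ y} ∪ ↑E := by
    intro n hn
    obtain ⟨hn0, hnx, htn⟩ := hn
    by_cases hP : (Pplus n : ℝ) ≤ y
    · exact Or.inl ⟨hn0, hnx, hP⟩
    · right
      refine Finset.mem_coe.mpr (Finset.mem_filter.mpr ⟨?_, ?_, ?_⟩)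
      · exact Finset.mem_Icc.mpr ⟨hn0, Nat.le_floor hnx⟩
      · intro p hp hTp
        have hyp : y < p := (hTlt p).mp hTp
        have hlt : tn n < p := by
          have : (tn n : ℝ) < p := lt_of_le_of_lt htn hyp
          exact_mod_cast this
        exact even_factorization_of_tn_lt hn0 (Nat.prime_of_mem_primeFactors hp) hlt
      · rw [hTlt]
        push_neg at hP
        exact hP
  have hfinR : {n : ℕ | 0 < n ∧ (n : ℝ) ≤ x ∧ (Pplus n : ℝ) ≤ y}.Finite := by
    apply Set.Finite.subset (Finset.Icc 1 N).finite_toSet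
    intro n hn
    exact Finset.mem_coe.mpr (Finset.mem_Icc.mpr ⟨hn.1, Nat.le_floor hn.2.1⟩)
  have hcount : ({n : ℕ | 0 < n ∧ (n : ℝ) ≤ x ∧ (tn n : ℝ) ≤ y}.ncard : ℝ)
      ≤ ({n : ℕ | 0 < n ∧ (n : ℝ) ≤ x ∧ (Pplus n : ℝ) ≤ y}.ncard : ℝ) + E.card := by
    have h1 := Set.ncard_le_ncard hsub (Set.Finite.union hfinR E.finite_toSet)
    have h2 := Set.ncard_union_le {n : ℕ | 0 < n ∧ (n : ℝ) ≤ x ∧ (Pplus n : ℝ) ≤ y} (↑E)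
    rw [Set.ncard_coe_finset] at h2
    exact_mod_cast le_trans h1 h2
  -- bound on E
  have hEbound : (E.card : ℝ) ≤ 3 * x * Real.exp (-u) := by
    rcases le_total (1/u) c with hcu | hcu
    · -- large c : squarefull argument
      have hEbad : ∀ n ∈ E, ∃ p, T < p ∧ p^2 ∣ n := by
        intro n hn
        rw [hE, Finset.mem_filter] at hn
        obtain ⟨hnIcc, hall, hPp⟩ := hn
        have hn0 : 0 < n := (Finset.mem_Icc.mp hnIcc).1
        have h2 : 2 ≤ Pplus n := by omega
        have hmem := Pplus_mem n h2
        have hp := Nat.prime_of_mem_primeFactors hmem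
        have heven := hall _ hmem hPp
        have hv1 : 1 ≤ n.factorization (Pplus n) := by
          rw [← Nat.Prime.pow_dvd_iff_le_factorization hp hn0.ne', pow_one]
          exact Nat.dvd_of_mem_primeFactors hmem
        have hv2 : 2 ≤ n.factorization (Pplus n) := by
          rcases heven with ⟨k, hk⟩
          omega
        exact ⟨Pplus n, hPp, (Nat.Prime.pow_dvd_iff_le_factorization hp hn0.ne').mpr hv2⟩
      have hEc := card_bad_le N T hT1 E (Finset.filter_subset _ _) hEbad
      have hT2 : y/2 ≤ T := by
        rcases le_total y 2 with h | h
        · have h1 : (1:ℝ) ≤ T := by exact_mod_cast hT1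
          linarith
        · have h1 : y - 1 < (T:ℝ) := by
            have := Nat.sub_one_lt_floor y
            rw [hTdef]
            exact_mod_cast this
          linarith
      have hT0 : (0:ℝ) < T := by
        have : (1:ℝ) ≤ T := by exact_mod_cast hT1
        linarith
      have hculu : u ≤ c * L := by
        have h1 : (1/u) * L ≤ c * L := mul_le_mul_of_nonneg_right hcu hL0.le
        have h2 : (1/u) * L = u := by
          rw [← hu2]
          field_simp
        linarith
      calc (E.card : ℝ) ≤ (N:ℝ)/T := hEc
        _ ≤ x/T := by gcongr
        _ ≤ x/(y/2) := by
            apply div_le_div_of_nonneg_left hx0.le (by linarith) hT2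
        _ = 2 * x * (1/y) := by
            field_simp
        _ = 2 * x * Real.exp (-(c*L)) := by
            rw [hyexp, one_div, ← Real.exp_neg]
        _ ≤ 2 * x * Real.exp (-u) := by
            apply mul_le_mul_of_nonneg_left _ (by positivity)
            apply Real.exp_le_exp.mpr
            linarith
        _ ≤ 3 * x * Real.exp (-u) := by
            have h1 : (0:ℝ) ≤ x * Real.exp (-u) := by positivity
            nlinarith
    · -- small c : Rankin
      have hEM : E ⊆ (Finset.Icc 1 N).filter
          (fun n => ∀ p ∈ n.primeFactors, T < p → Even (n.factorization p)) := by
        intro n hn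
        rw [hE, Finset.mem_filter] at hn
        exact Finset.mem_filter.mpr ⟨hn.1, hn.2.1⟩
      set σ : ℝ := 1 - 2/u with hσdef
      have hui : (0:ℝ) < 2/u := by positivity
      have h2u : 2/u ≤ 1/4 := by
        rw [div_le_div_iff₀ hu0 (by norm_num)]
        linarith
      have hσ0 : 0 ≤ σ := by rw [hσdef]; linarith
      have hσ1 : σ ≤ 1 := by rw [hσdef]; linarith
      have hσ32 : (3:ℝ)/2 ≤ 2*σ := by rw [hσdef]; linarith
      have hrk := rankin_count N T x σ hx0 hNx hσ0 hσ1 hσ32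
      have hEcard : (E.card : ℝ)
          ≤ x ^ σ * (∏ p ∈ Nat.primesBelow (T+1), (1 + (p:ℝ) ^ (-σ)))
            * ∑ b ∈ Finset.Icc 1 (Nat.sqrt N), ((b:ℝ)) ^ (-(2*σ)) := by
        refine le_trans ?_ hrk
        exact_mod_cast Finset.card_le_card hEM
      set J : ℕ := ⌈2*u⌉₊ with hJdef
      have hJ2u : 2*u ≤ (J:ℝ) := Nat.le_ceil _
      have hJ1 : 1 ≤ J := by
        rw [hJdef]
        exact_mod_cast Nat.one_le_ceil_iff.mpr (by positivity)
      have hJle : (J:ℝ) ≤ 3*u := by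
        have := Nat.ceil_lt_add_one (by positivity : (0:ℝ) ≤ 2*u)
        rw [hJdef]
        push_cast
        linarith [this]
      have hculu : c * L ≤ u := by
        have h1 : c * L ≤ (1/u) * L := mul_le_mul_of_nonneg_right hcu hL0.le
        have h2 : (1/u) * L = u := by
          rw [← hu2]; field_simp
        linarith
      have hTJ : T ≤ 2^J := by
        have h1 : (T:ℝ) ≤ Real.exp u := by
          calc (T:ℝ) ≤ y := hTy
            _ = Real.exp (c*L) := hyexp
            _ ≤ Real.exp u := Real.exp_le_exp.mpr hculu
        have hlog2 : (1:ℝ)/2 ≤ Real.log 2 := by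
          have := Real.log_two_gt_d9
          linarith
        have h2 : Real.exp u ≤ ((2:ℝ))^J := by
          rw [show ((2:ℝ))^J = Real.exp (J * Real.log 2) by
            rw [Real.exp_nat_mul, Real.exp_log (by norm_num)]]
          apply Real.exp_le_exp.mpr
          calc u = (2*u) * (1/2) := by ring
            _ ≤ (J:ℝ) * Real.log 2 := by
                apply mul_le_mul hJ2u hlog2 (by norm_num) (by positivity)
        have : (T:ℝ) ≤ ((2:ℝ))^J := le_trans h1 h2
        exact_mod_cast this
      have hS := sum_primes_recip_le T J hJ1 hTJ
      have hK : ∀ p ∈ Nat.primesBelow (T+1), (p:ℝ)^((1:ℝ)-σ) ≤ Real.exp 2 := by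
        intro p hp
        have hp2 : 2 ≤ p := (Nat.prime_of_mem_primesBelow hp).two_le
        have hpT : p ≤ T := by
          have := Nat.lt_of_mem_primesBelow hp
          omega
        have hp0 : (0:ℝ) < p := by positivity
        rw [show (1:ℝ) - σ = 2/u by rw [hσdef]; ring, Real.rpow_def_of_pos hp0]
        apply Real.exp_le_exp.mpr
        have hlogp : Real.log p ≤ c * L := by
          calc Real.log p ≤ Real.log y := by
                apply Real.log_le_log hp0
                calc (p:ℝ) ≤ T := by exact_mod_cast hpT
                  _ ≤ y := hTy
            _ = c * L := by rw [hyexp, Real.log_exp]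
        calc Real.log p * (2/u) ≤ u * (2/u) := by
              apply mul_le_mul_of_nonneg_right (le_trans hlogp hculu) (by positivity)
          _ = 2 := by field_simp
      have hprod := prod_one_add_le T σ (Real.exp 2) (Real.exp_pos 2).le hK
      -- numeric bound : exp 2 * (5 + 4 log J) ≤ u
      have hnum : Real.exp 2 * (5 + 4 * Real.log J) ≤ u := by
        have he2 : Real.exp 2 ≤ 7.4 := by
          have h1 := Real.exp_one_lt_d9
          have h2 : Real.exp 2 = Real.exp 1 * Real.exp 1 := by
            rw [← Real.exp_add]; norm_num
          nlinarith [Real.exp_pos 1]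
        have hsu : Real.sqrt u * Real.sqrt u = u := Real.mul_self_sqrt hu0.le
        have hsu173 : (173:ℝ) ≤ Real.sqrt u := by
          rw [Real.le_sqrt (by norm_num) hu0.le]
          nlinarith
        have hlogJ : Real.log J ≤ 4 * Real.sqrt u := by
          have hJpos : (0:ℝ) < J := by
            have h : (1:ℕ) ≤ J := hJ1
            exact_mod_cast Nat.pos_of_ne_zero (by omega)
          have h1 : Real.log J ≤ Real.log (4*u) := by
            apply Real.log_le_log hJpos
            linarith
          have h2 : Real.log (4*u) = 2 * Real.log (Real.sqrt (4*u)) := by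
            rw [Real.log_sqrt (by linarith)]
            ring
          have h3 : Real.sqrt (4*u) = 2 * Real.sqrt u := by
            rw [show (4:ℝ)*u = (2*Real.sqrt u)^2 by rw [mul_pow]; rw [Real.sq_sqrt hu0.le]; ring]
            rw [Real.sqrt_sq (by positivity)]
          have h4 : Real.log (Real.sqrt (4*u)) ≤ Real.sqrt (4*u) - 1 :=
            Real.log_le_sub_one_of_pos (by rw [h3]; positivity)
          rw [h3] at h2 h4
          linarith
        have hlogJ0 : (0:ℝ) ≤ Real.log J := by
          apply Real.log_nonneg
          exact_mod_cast hJ1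
        have he20 : (0:ℝ) < Real.exp 2 := Real.exp_pos 2
        nlinarith [mul_nonneg (sub_nonneg.mpr he2) (by linarith : (0:ℝ) ≤ 5 + 4 * Real.log J),
          mul_nonneg (sub_nonneg.mpr hsu173) (by linarith : (0:ℝ) ≤ Real.sqrt u),
          mul_le_mul_of_nonneg_left hlogJ (by norm_num : (0:ℝ) ≤ 29.6)]
      -- combine
      have hSum3 : ∑ b ∈ Finset.Icc 1 (Nat.sqrt N), ((b:ℝ)) ^ (-(2*σ)) ≤ 3 :=
        sum_rpow_le_three (Nat.sqrt N) σ hσ32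
      have hProdE : (∏ p ∈ Nat.primesBelow (T+1), (1 + (p:ℝ) ^ (-σ))) ≤ Real.exp u := by
        refine le_trans hprod ?_
        apply Real.exp_le_exp.mpr
        have : Real.exp 2 * (∑ p ∈ Nat.primesBelow (T+1), (1:ℝ)/p)
            ≤ Real.exp 2 * (5 + 4 * Real.log J) :=
          mul_le_mul_of_nonneg_left hS (Real.exp_pos 2).le
        linarith
      have hxσ : x ^ σ = x * Real.exp (-(2*u)) := by
        rw [Real.rpow_def_of_pos hx0, ← hLdef]
        have h1 : L * σ = L + (-(2*u)) := by
          rw [hσdef]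
          field_simp
          nlinarith [hu2]
        rw [h1, Real.exp_add, Real.exp_log hx0]
      have hProd0 : (0:ℝ) ≤ ∏ p ∈ Nat.primesBelow (T+1), (1 + (p:ℝ) ^ (-σ)) := by
        apply Finset.prod_nonneg
        intro p hp
        have := Real.rpow_nonneg (by positivity : (0:ℝ) ≤ (p:ℝ)) (-σ)
        linarith
      have hSum0 : (0:ℝ) ≤ ∑ b ∈ Finset.Icc 1 (Nat.sqrt N), ((b:ℝ)) ^ (-(2*σ)) := by
        apply Finset.sum_nonneg
        intro b hb
        positivity
      calc (E.card : ℝ)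
          ≤ x ^ σ * (∏ p ∈ Nat.primesBelow (T+1), (1 + (p:ℝ) ^ (-σ)))
            * ∑ b ∈ Finset.Icc 1 (Nat.sqrt N), ((b:ℝ)) ^ (-(2*σ)) := hEcard
        _ ≤ x ^ σ * Real.exp u * 3 := by
            apply mul_le_mul
            · apply mul_le_mul_of_nonneg_left hProdE (Real.rpow_nonneg hx0.le σ)
            · exact hSum3
            · exact hSum0
            · positivity
        _ = 3 * x * Real.exp (-u) := by
            rw [hxσ]
            rw [show x * Real.exp (-(2*u)) * Real.exp u * 3
              = 3 * x * (Real.exp (-(2*u)) * Real.exp u) by ring]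
            rw [← Real.exp_add]
            congr 2
            ring
  -- final combination
  have hxe : (0:ℝ) ≤ x * Real.exp (-u) := by positivity
  calc ({n : ℕ | 0 < n ∧ (n : ℝ) ≤ x ∧ (tn n : ℝ) ≤ y}.ncard : ℝ)
      ≤ ({n : ℕ | 0 < n ∧ (n : ℝ) ≤ x ∧ (Pplus n : ℝ) ≤ y}.ncard : ℝ) + E.card := hcount
    _ ≤ ({n : ℕ | 0 < n ∧ (n : ℝ) ≤ x ∧ (Pplus n : ℝ) ≤ y}.ncard : ℝ)
        + 4 * x * Real.exp (-u) := by linarith [hEbound]
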